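/- The pressure function for the Fibonacci-weighted Birkhoff average with potential f depending on two coordinates on {0,1}^ℕ satisfies: for every β ∈ ℝ, ψ(β) = (√5 − 2) log 2 + ((3−√5)/2) log(e^{β f(0,0)} + e^{β f(0,1)} + e^{β f(1,0)} + e^{β f(1,1)}), where ψ(β) is the Lyapunov exponent of the matrix products A_{ω_n}(β) with A_0(β) = 𝟙𝟙' (the all-ones 2×2 matrix), A_1(β) = (e^{β f(i,j)})_{i,j∈{0,1}}, and ω the Fibonacci sequence. -/

import Mathlib

open Filter Topology Matrix

/-- The entry-sum norm `‖A‖ = ∑ᵢⱼ |aᵢⱼ|`. -/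
def entrySumNorm {d : ℕ} (A : Matrix (Fin d) (Fin d) ℝ) : ℝ := ∑ i, ∑ j, |A i j|

/-- The product `A_{ω₀} A_{ω₁} ⋯ A_{ω_{n-1}}` of matrices selected along the sequence `ω`. -/
def prodAlong {d m : ℕ} (A : Fin m → Matrix (Fin d) (Fin d) ℝ) (ω : ℕ → Fin m) (n : ℕ) :
    Matrix (Fin d) (Fin d) ℝ :=
  (List.ofFn fun i : Fin n => A (ω i)).prod

/-- The Fibonacci substitution `0 ↦ 01`, `1 ↦ 0`. -/
def fibSub : Fin 2 → List (Fin 2)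
  | 0 => [0, 1]
  | 1 => [0]

/-- The Fibonacci sequence, the fixed point `ζ^∞(0)` of the Fibonacci substitution. -/
def fibSeq (k : ℕ) : Fin 2 :=
  ((fun l => l.flatMap fibSub)^[k + 2] [0]).getD k 0

/-- The matrices `A₀(β) = 𝟙𝟙ᵀ` (all ones) and `A₁(β) = (e^{β f(i,j)})`. -/
noncomputable def pressureMat (f : Fin 2 → Fin 2 → ℝ) (β : ℝ) :
    Fin 2 → Matrix (Fin 2) (Fin 2) ℝ := fun s =>
  if s = 0 then Matrix.of (fun _ _ => 1) else Matrix.of fun i j => Real.exp (β * f i j)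

namespace FibAux

/-- The substitution applied to lists. -/
def zeta (l : List (Fin 2)) : List (Fin 2) := l.flatMap fibSub

/-- Iterates of the substitution on `[0]`. -/
def W (m : ℕ) : List (Fin 2) := zeta^[m] [0]

lemma W_succ (m : ℕ) : W (m + 1) = zeta (W m) := Function.iterate_succ_apply' _ _ _

lemma zeta_append (l l' : List (Fin 2)) : zeta (l ++ l') = zeta l ++ zeta l' :=
  List.flatMap_append

lemma W_add_two (m : ℕ) : W (m + 2) = W (m + 1) ++ W m := by
  induction m with
  | zero => rfl
  | succ m ih =>
      calc W (m + 3) = zeta (W (m + 2)) := W_succ (m + 2)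
        _ = zeta (W (m + 1) ++ W m) := by rw [ih]
        _ = zeta (W (m + 1)) ++ zeta (W m) := zeta_append _ _
        _ = W (m + 2) ++ W (m + 1) := by rw [← W_succ, ← W_succ]

lemma length_W (m : ℕ) : m + 1 ≤ (W m).length := by
  induction m using Nat.strong_induction_on with
  | _ m ih =>
    match m with
    | 0 => simp [W, zeta]
    | 1 => simp [W, zeta, fibSub]
    | (m + 2) =>
        rw [W_add_two]
        have h1 := ih (m + 1) (by omega)
        have h2 := ih m (by omega)
        simp only [List.length_append]
        omega

lemma W_prefix (m : ℕ) : W m <+: W (m + 1) := by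
  match m with
  | 0 => exact ⟨[1], rfl⟩
  | (m + 1) => rw [W_add_two]; exact List.prefix_append _ _

lemma W_prefix_le {m m' : ℕ} (h : m ≤ m') : W m <+: W m' := by
  induction m' with
  | zero => rw [Nat.le_zero.mp h]
  | succ m' ih =>
      rcases Nat.lt_or_ge m (m' + 1) with h' | h'
      · exact (ih (by omega)).trans (W_prefix m')
      · have : m = m' + 1 := by omega
        rw [this]

lemma fibSeq_eq_getElem {k m : ℕ} (h : k + 2 ≤ m) (hk : k < (W m).length) :
    fibSeq k = (W m)[k] := by
  have hpre : W (k + 2) <+: W m := W_prefix_le h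
  have hk2 : k < (W (k + 2)).length := by have := length_W (k + 2); omega
  have : fibSeq k = (W (k + 2))[k] := by
    show ((W (k+2)).getD k 0) = _
    rw [List.getD_eq_getElem _ _ hk2]
  rw [this, hpre.getElem hk2]

/-- No two adjacent 1's: the image of any word under `zeta` has this property. -/
lemma chain'_zeta (l : List (Fin 2)) :
    List.Chain' (fun a b : Fin 2 => a = 0 ∨ b = 0) (zeta l) := by
  induction l with
  | nil => simp [zeta, List.Chain']
  | cons x l ih =>
      have hhead : zeta l = [] ∨ ∃ t, zeta l = 0 :: t := by
        cases l with
        | nil => left; rfl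
        | cons y l' =>
            right
            fin_cases y <;> exact ⟨_, rfl⟩
      have : zeta (x :: l) = fibSub x ++ zeta l := rfl
      rw [this, List.Chain', List.isChain_append]
      refine ⟨?_, ih, ?_⟩
      · fin_cases x <;> simp [fibSub]
      · intro a ha b hb
        rcases hhead with h | ⟨t, h⟩
        · simp [h] at hb
        · right; simp [h] at hb; omega

lemma fibSeq_no_11 (k : ℕ) (h : fibSeq k = 1) : fibSeq (k + 1) = 0 := by
  set m := k + 3 with hm
  have hlen := length_W m
  have hk : k < (W m).length := by omega
  have hk1 : k + 1 < (W m).length := by omega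
  have e1 : fibSeq k = (W m)[k] := fibSeq_eq_getElem (by omega) hk
  have e2 : fibSeq (k + 1) = (W m)[k + 1] := fibSeq_eq_getElem (by omega) hk1
  have hch : List.Chain' (fun a b : Fin 2 => a = 0 ∨ b = 0) (W m) := by
    have : W m = zeta (W (k + 2)) := W_succ (k + 2)
    rw [this]; exact chain'_zeta _
  rw [List.Chain', List.isChain_iff_getElem] at hch
  have := hch k (by omega)
  rcases this with h0 | h0
  · rw [e1, h0] at h; exact absurd h (by decide)
  · rw [e2]; exact h0

lemma fibSeq_zero : fibSeq 0 = 0 := rfl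

/-! ### Counting ones -/

/-- The prefix of length `n` of the Fibonacci word. -/
def pref (n : ℕ) : List (Fin 2) := (W (n + 2)).take n

lemma take_eq_of_prefix {l l' : List (Fin 2)} {n : ℕ} (h : l <+: l') (hn : n ≤ l.length) :
    l'.take n = l.take n := by
  obtain ⟨t, rfl⟩ := h
  rw [List.take_append, Nat.sub_eq_zero_of_le hn, List.take_zero,
    List.append_nil]

lemma take_W_eq {n m : ℕ} (h : n ≤ (W m).length) : (W m).take n = pref n := by
  rcases Nat.le_total m (n + 2) with h' | h'
  · rw [pref, take_eq_of_prefix (W_prefix_le h') h]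
  · have hlen : n ≤ (W (n + 2)).length := by have := length_W (n + 2); omega
    rw [pref, take_eq_of_prefix (W_prefix_le h') hlen]

/-- Number of ones in the length-`n` prefix. -/
def a (n : ℕ) : ℕ := (pref n).count 1

lemma pref_succ (n : ℕ) : pref (n + 1) = pref n ++ [fibSeq n] := by
  have hlen := length_W (n + 3)
  have hn : n < (W (n + 3)).length := by omega
  have h1 : pref (n + 1) = (W (n + 3)).take (n + 1) := (take_W_eq (by omega)).symm
  have h2 : pref n = (W (n + 3)).take n := (take_W_eq (by omega)).symm
  rw [h1, h2, List.take_succ, List.getElem?_eq_getElem hn,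
    fibSeq_eq_getElem (k := n) (m := n + 3) (by omega) hn]
  rfl

lemma a_succ (n : ℕ) : a (n + 1) = a n + if fibSeq n = 1 then 1 else 0 := by
  rw [a, a, pref_succ, List.count_append]
  congr 1
  rcases (by decide : ∀ x : Fin 2, x = 0 ∨ x = 1) (fibSeq n) with h | h <;>
    rw [h] <;> simp

lemma a_zero : a 0 = 0 := rfl

/-- Count of ones in `W m`. -/
def C (m : ℕ) : ℕ := (W m).count 1

lemma C_add_two (m : ℕ) : C (m + 2) = C (m + 1) + C m := by
  rw [C, W_add_two, List.count_append]; rfl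

lemma C_zero : C 0 = 0 := rfl
lemma C_one : C 1 = 1 := rfl

/-- The Zeckendorf-type recursion for the count. -/
lemma a_rec {m n : ℕ} (h1 : (W (m + 1)).length ≤ n) (h2 : n ≤ (W (m + 2)).length) :
    a n = C (m + 1) + a (n - (W (m + 1)).length) := by
  have hsub : n - (W (m + 1)).length ≤ (W m).length := by
    rw [W_add_two, List.length_append] at h2; omega
  have key : pref n = (W (m + 2)).take n := (take_W_eq h2).symm
  rw [a, key, W_add_two, List.take_append,
    List.take_of_length_le h1, List.count_append, C, take_W_eq hsub, a]


/-! ### The frequency estimate -/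

noncomputable def q : ℝ := (3 - Real.sqrt 5) / 2
noncomputable def r : ℝ := (Real.sqrt 5 - 1) / 2

lemma sqrt5_sq : Real.sqrt 5 ^ 2 = 5 := Real.sq_sqrt (by norm_num)

lemma sqrt5_gt : 2 < Real.sqrt 5 := by
  nlinarith [sqrt5_sq, Real.sqrt_nonneg 5]

lemma sqrt5_lt : Real.sqrt 5 < 3 := by
  nlinarith [sqrt5_sq, Real.sqrt_nonneg 5]

lemma r_pos : 0 < r := by rw [r]; linarith [sqrt5_gt]
lemma r_lt_one : r < 1 := by rw [r]; linarith [sqrt5_lt]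
lemma q_pos : 0 < q := by rw [q]; linarith [sqrt5_lt]
lemma q_eq : q = 1 - r := by rw [q, r]; ring
lemma r_sq : r ^ 2 = 1 - r := by rw [r]; nlinarith [sqrt5_sq]
lemma qr_add_r_sq : q * r + r ^ 2 = r := by
  rw [q, r]; nlinarith [sqrt5_sq]

lemma delta_eq (m : ℕ) : (C m : ℝ) - q * ((W m).length : ℝ) = -q * (-r) ^ m := by
  induction m using Nat.strong_induction_on with
  | _ m ih =>
    match m with
    | 0 => simp [C_zero, W, zeta]
    | 1 =>
        have hC : C 1 = 1 := C_one
        have hL : (W 1).length = 2 := rfl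
        rw [hC, hL, q, r]; push_cast; nlinarith [sqrt5_sq]
    | (m + 2) =>
        have h1 := ih (m + 1) (by omega)
        have h2 := ih m (by omega)
        have hC : (C (m + 2) : ℝ) = C (m + 1) + C m := by
          rw [C_add_two]; push_cast; ring
        have hL : ((W (m + 2)).length : ℝ) = (W (m + 1)).length + (W m).length := by
          rw [W_add_two, List.length_append]; push_cast; ring
        have hr : (-r) ^ (m + 2) = (-r) ^ (m + 1) + (-r) ^ m := by
          have h : (-r) ^ (m + 2) = (-r) ^ m * r ^ 2 := by ring
          rw [h, r_sq]; ring
        rw [hC, hL, hr]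
        linarith [h1, h2]

lemma abs_est : ∀ m, ∀ n < (W m).length, |(a n : ℝ) - q * n| ≤ 1 - r ^ m := by
  intro m
  induction m using Nat.strong_induction_on with
  | _ m ih =>
    match m with
    | 0 =>
        intro n hn
        have hl : (W 0).length = 1 := rfl
        rw [hl] at hn
        interval_cases n
        simp [a_zero]
    | 1 =>
        intro n hn
        have hl : (W 1).length = 2 := rfl
        rw [hl] at hn
        have hr1 : r ^ 1 = r := pow_one r
        interval_cases n
        · rw [hr1]; simp [a_zero]; linarith [r_lt_one]
        · have ha1 : a 1 = 0 := by
            rw [a_succ, a_zero, fibSeq_zero]; simp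
          rw [ha1, hr1]
          push_cast
          rw [show (0:ℝ) - q * 1 = -q by ring, abs_neg, abs_of_pos q_pos, q_eq]
    | (m + 2) =>
        intro n hn
        have hrm : (0:ℝ) < r ^ m := pow_pos r_pos m
        have hp1 : r ^ (m + 1) = r * r ^ m := by ring
        have hp2 : r ^ (m + 2) = r ^ 2 * r ^ m := by ring
        rcases Nat.lt_or_ge n ((W (m + 1)).length) with h | h
        · have hb := ih (m + 1) (by omega) n h
          have : r ^ (m + 2) ≤ r ^ (m + 1) := by
            have hr2 : (1:ℝ) - r ≤ r := by rw [r]; linarith [sqrt5_gt]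
            rw [hp1, hp2, r_sq]
            nlinarith [hrm, hr2]
          linarith
        · have hsplit : (W (m + 2)).length = (W (m + 1)).length + (W m).length := by
            rw [W_add_two, List.length_append]
          have hrec := a_rec (m := m) h (le_of_lt hn)
          set n' := n - (W (m + 1)).length with hn'
          have hn'lt : n' < (W m).length := by omega
          have hnat : n = (W (m + 1)).length + n' := by omega
          have hb' := ih m (by omega) n' hn'lt
          have hdec : (a n : ℝ) - q * n =
              ((C (m + 1) : ℝ) - q * ((W (m + 1)).length : ℝ)) + ((a n' : ℝ) - q * n') := by
            rw [hrec, hnat]; push_cast; ring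
          have habs : |(a n : ℝ) - q * n| ≤ q * r ^ (m + 1) + (1 - r ^ m) := by
            rw [hdec]
            refine le_trans (abs_add_le _ _) ?_
            have : |(C (m + 1) : ℝ) - q * ((W (m + 1)).length : ℝ)| = q * r ^ (m + 1) := by
              rw [delta_eq, abs_mul, abs_neg, abs_of_pos q_pos, abs_pow, abs_neg,
                abs_of_pos r_pos]
            rw [this]
            linarith [hb']
          have hkey : q * r ^ (m + 1) + r ^ (m + 2) ≤ r ^ m := by
            have h1 : q * r ^ (m + 1) + r ^ (m + 2) = (q * r + r ^ 2) * r ^ m := by ring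
            rw [h1, qr_add_r_sq]
            nlinarith [r_lt_one, hrm]
          linarith

lemma abs_bound (n : ℕ) : |(a n : ℝ) - q * n| ≤ 1 := by
  have h1 : n < (W (n + 1)).length := by have := length_W (n + 1); omega
  have h2 := abs_est (n + 1) n h1
  have : (0:ℝ) < r ^ (n + 1) := pow_pos r_pos _
  linarith

lemma tendsto_freq : Tendsto (fun n : ℕ => (a n : ℝ) / n) atTop (𝓝 q) := by
  have h0 : Tendsto (fun n : ℕ => (a n : ℝ) / n - q) atTop (𝓝 0) := by
    apply squeeze_zero_norm' (a := fun n : ℕ => 1 / (n : ℝ))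
    · filter_upwards [eventually_ge_atTop 1] with n hn
      have hn' : (0:ℝ) < n := by exact_mod_cast hn
      have heq : (a n : ℝ) / n - q = ((a n : ℝ) - q * n) / n := by
        field_simp
      rw [Real.norm_eq_abs, heq, abs_div, abs_of_pos hn']
      gcongr
      exact abs_bound n
    · exact tendsto_one_div_atTop_nhds_zero_nat
  have := h0.add_const q
  simpa using this


/-! ### The matrix product -/

section Matrices

variable (f : Fin 2 → Fin 2 → ℝ) (β : ℝ)

noncomputable def Ssum : ℝ := ∑ i, ∑ j, Real.exp (β * f i j)

def A0 : Matrix (Fin 2) (Fin 2) ℝ := Matrix.of fun _ _ => 1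

noncomputable def A1 : Matrix (Fin 2) (Fin 2) ℝ := Matrix.of fun i j => Real.exp (β * f i j)

lemma Ssum_pos : 0 < Ssum f β := by
  rw [Ssum]
  refine Finset.sum_pos (fun i _ => Finset.sum_pos (fun j _ => Real.exp_pos _) ?_) ?_ <;>
    simp

/-- The running scalar coefficient. -/
noncomputable def g (n : ℕ) : ℝ := 2 ^ (n + 1) * (Ssum f β / 4) ^ (a n)

lemma g_pos (n : ℕ) : 0 < g f β n := by
  have := Ssum_pos f β
  rw [g]; positivity

lemma g_succ (n : ℕ) :
    g f β (n + 1) = 2 * g f β n * (if fibSeq n = 1 then Ssum f β / 4 else 1) := by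
  rw [g, g, a_succ]
  by_cases h : fibSeq n = 1 <;> simp [h, pow_succ, pow_add] <;> ring

lemma A0_mul_A0 : A0 * A0 = (2 : ℝ) • A0 := by
  ext i j
  simp [A0, Matrix.mul_apply, Fin.sum_univ_two]

lemma A0_mul_A1_mul_A0 : A0 * A1 f β * A0 = Ssum f β • A0 := by
  ext i j
  simp [A0, A1, Ssum, Matrix.mul_apply, Fin.sum_univ_two, Fin.sum_univ_two]
  ring

lemma prodAlong_succ {d m : ℕ} (A : Fin m → Matrix (Fin d) (Fin d) ℝ) (ω : ℕ → Fin m) (n : ℕ) :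
    prodAlong A ω (n + 1) = prodAlong A ω n * A (ω n) := by
  rw [prodAlong, prodAlong, List.ofFn_succ', List.prod_concat]
  simp

lemma prodAlong_one {d m : ℕ} (A : Fin m → Matrix (Fin d) (Fin d) ℝ) (ω : ℕ → Fin m) :
    prodAlong A ω 1 = A (ω 0) := by
  simp [prodAlong, List.ofFn_succ]

lemma pressureMat_zero : pressureMat f β 0 = A0 := by
  simp [pressureMat, A0]

lemma pressureMat_one : pressureMat f β 1 = A1 f β := by
  simp [pressureMat, A1]

/-- The key structural invariant for the matrix products. -/
lemma invariant : ∀ n, 1 ≤ n →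
    (fibSeq (n - 1) = 0 ∧
      prodAlong (pressureMat f β) fibSeq n = (g f β n / 4) • A0) ∨
    (fibSeq (n - 1) = 1 ∧
      prodAlong (pressureMat f β) fibSeq n =
        (g f β n / (2 * Ssum f β)) • (A0 * A1 f β)) := by
  intro n hn
  induction n, hn using Nat.le_induction with
  | base =>
      left
      refine ⟨fibSeq_zero, ?_⟩
      rw [prodAlong_one, fibSeq_zero, pressureMat_zero]
      have : g f β 1 = 4 := by
        have ha1 : a 1 = 0 := by rw [a_succ, a_zero, fibSeq_zero]; simp
        rw [g, ha1]; norm_num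
      rw [this]; norm_num
  | succ n hn ih =>
      have hS := Ssum_pos f β
      have hSne : Ssum f β ≠ 0 := ne_of_gt hS
      have hstep := prodAlong_succ (pressureMat f β) fibSeq n
      have hn1 : n - 1 + 1 = n := by omega
      have hsub : n + 1 - 1 = n := by omega
      rcases (by decide : ∀ x : Fin 2, x = 0 ∨ x = 1) (fibSeq n) with h | h
      · -- new letter is 0
        left
        refine ⟨by rw [hsub]; exact h, ?_⟩
        rcases ih with ⟨h0, hP⟩ | ⟨h1, hP⟩
        · rw [hstep, hP, h, pressureMat_zero, smul_mul_assoc, A0_mul_A0, smul_smul,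
            g_succ, h]
          simp only [if_neg (by decide : ¬ (0:Fin 2) = 1)]
          congr 1; ring
        · rw [hstep, hP, h, pressureMat_zero, smul_mul_assoc, A0_mul_A1_mul_A0, smul_smul,
            g_succ, h]
          simp only [if_neg (by decide : ¬ (0:Fin 2) = 1)]
          congr 1; field_simp; ring
      · -- new letter is 1
        rcases ih with ⟨h0, hP⟩ | ⟨h1, hP⟩
        · right
          refine ⟨by rw [hsub]; exact h, ?_⟩
          rw [hstep, hP, h, pressureMat_one, smul_mul_assoc, g_succ, h, if_pos rfl]
          congr 1; field_simp
        · exfalso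
          have h2 := fibSeq_no_11 (n - 1) h1
          rw [hn1, h] at h2
          exact absurd h2 (by decide)

lemma entrySumNorm_smul (c : ℝ) (hc : 0 ≤ c) {d : ℕ} (M : Matrix (Fin d) (Fin d) ℝ) :
    entrySumNorm (c • M) = c * entrySumNorm M := by
  simp [entrySumNorm, abs_mul, abs_of_nonneg hc, Finset.mul_sum]

lemma entrySumNorm_A0 : entrySumNorm A0 = 4 := by
  simp [entrySumNorm, A0, Fin.sum_univ_two]
  norm_num

lemma entrySumNorm_A0_mul_A1 : entrySumNorm (A0 * A1 f β) = 2 * Ssum f β := by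
  rw [entrySumNorm, Ssum]
  simp only [Matrix.mul_apply, A0, A1, Matrix.of_apply, Fin.sum_univ_two, one_mul]
  repeat rw [abs_of_pos (by positivity)]
  ring

lemma entrySum_eq (n : ℕ) (hn : 1 ≤ n) :
    entrySumNorm (prodAlong (pressureMat f β) fibSeq n) = g f β n := by
  have hS := Ssum_pos f β
  have hg := g_pos f β n
  rcases invariant f β n hn with ⟨-, hP⟩ | ⟨-, hP⟩
  · rw [hP, entrySumNorm_smul _ (by positivity), entrySumNorm_A0]; ring
  · rw [hP, entrySumNorm_smul _ (by positivity), entrySumNorm_A0_mul_A1]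
    field_simp

lemma log_g (n : ℕ) :
    Real.log (g f β n) = ((n : ℝ) + 1) * Real.log 2 +
      (a n : ℝ) * Real.log (Ssum f β / 4) := by
  have hS := Ssum_pos f β
  rw [g, Real.log_mul (by positivity) (by positivity), Real.log_pow, Real.log_pow]
  push_cast
  ring

end Matrices
end FibAux



/-- The pressure function of the Fibonacci-weighted Birkhoff average, i.e. the Lyapunov exponent
of the products of `A₀(β) = 𝟙𝟙ᵀ` and `A₁(β) = (e^{β f(i,j)})` selected along the Fibonacci
sequence, equals `(√5-2) log 2 + ((3-√5)/2) log(∑_{i,j} e^{β f(i,j)})`. -/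
theorem pressure_fibonacci_weight (f : Fin 2 → Fin 2 → ℝ) (β : ℝ) :
    Tendsto (fun n => Real.log (entrySumNorm (prodAlong (pressureMat f β) fibSeq n)) / n)
      atTop (𝓝 ((Real.sqrt 5 - 2) * Real.log 2 +
        ((3 - Real.sqrt 5) / 2) * Real.log (∑ i, ∑ j, Real.exp (β * f i j)))) := by
  classical
  have hS := FibAux.Ssum_pos f β
  have hSne : FibAux.Ssum f β ≠ 0 := ne_of_gt hS
  -- the limit of the explicit formula
  have hT1 : Tendsto (fun n : ℕ => ((n : ℝ) + 1) / n) atTop (𝓝 1) := by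
    have h0 : Tendsto (fun n : ℕ => 1 + 1 / (n : ℝ)) atTop (𝓝 1) := by
      simpa using (tendsto_const_nhds (x := (1:ℝ)) (f := atTop)).add
        tendsto_one_div_atTop_nhds_zero_nat
    refine h0.congr' ?_
    filter_upwards [eventually_ge_atTop 1] with n hn
    have hn' : (n : ℝ) ≠ 0 := by positivity
    field_simp
  have hT : Tendsto (fun n : ℕ => ((n : ℝ) + 1) / n * Real.log 2 +
      ((FibAux.a n : ℝ) / n) * Real.log (FibAux.Ssum f β / 4)) atTop
      (𝓝 (1 * Real.log 2 + FibAux.q * Real.log (FibAux.Ssum f β / 4))) :=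
    (hT1.mul_const _).add (FibAux.tendsto_freq.mul_const _)
  have heq : (1 : ℝ) * Real.log 2 + FibAux.q * Real.log (FibAux.Ssum f β / 4) =
      (Real.sqrt 5 - 2) * Real.log 2 +
        ((3 - Real.sqrt 5) / 2) * Real.log (∑ i, ∑ j, Real.exp (β * f i j)) := by
    have h4 : Real.log (FibAux.Ssum f β / 4) = Real.log (FibAux.Ssum f β) - 2 * Real.log 2 := by
      rw [Real.log_div hSne (by norm_num), show (4:ℝ) = 2 ^ 2 by norm_num, Real.log_pow]
      push_cast; ring
    have hsum : (∑ i, ∑ j, Real.exp (β * f i j)) = FibAux.Ssum f β := rfl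
    rw [h4, hsum, FibAux.q]
    ring
  rw [← heq]
  refine hT.congr' ?_
  filter_upwards [eventually_ge_atTop 1] with n hn
  rw [FibAux.entrySum_eq f β n hn, FibAux.log_g]
  ring
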